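/- For every integer d ≥ 2 and every ε > 0 there exists K > 0 such that the following holds. For every finite field F with |F| = q and every p ∈ [0,1] with p·q ≥ K, the probability that the p-random subset of F^d contains a set in general position of size at least p·q/2 is at least 1 − ε. (Claim 10.) -/

import Mathlib

open Finset

noncomputable section

/-- A set `S ⊆ F^d` is in general position if no `d+1` points of `S` lie in a common
affine subspace of dimension `d-1`. -/
def GenPos (F : Type*) [Field F] (d : ℕ) (S : Set (Fin d → F)) : Prop :=
  ∀ A : Finset (Fin d → F), ↑A ⊆ S → A.card = d + 1 →
    ¬ ∃ W : AffineSubspace F (Fin d → F),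
        Module.finrank F W.direction = d - 1 ∧ ∀ x ∈ A, x ∈ W

/- The probability, under the product Bernoulli(`p`) measure on subsets of `α`, of the
event `E`. -/
open Classical in
def randProb (α : Type*) [Fintype α] (p : ℝ) (E : Finset α → Prop) : ℝ :=
  ∑ A : Finset α, if E A then p ^ A.card * (1 - p) ^ (Fintype.card α - A.card) else 0

open Polynomial

variable {α : Type*} [DecidableEq α]

lemma sum_w_one (p : ℝ) (s : Finset α) :
    ∑ B ∈ s.powerset, p ^ B.card * (1 - p) ^ (s.card - B.card) = 1 := by
  have h := Finset.prod_add (fun _ : α => p) (fun _ : α => 1 - p) s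
  simp only [Finset.prod_const] at h
  calc ∑ B ∈ s.powerset, p ^ B.card * (1 - p) ^ (s.card - B.card)
      = ∑ B ∈ s.powerset, p ^ B.card * (1 - p) ^ (s \ B).card := by
        refine Finset.sum_congr rfl fun B hB => ?_
        rw [Finset.card_sdiff_of_subset (Finset.mem_powerset.mp hB)]
    _ = (p + (1 - p)) ^ s.card := h.symm
    _ = 1 := by norm_num

lemma sum_w_subset (p : ℝ) (s t : Finset α) (ht : t ⊆ s) :
    ∑ B ∈ s.powerset, (if t ⊆ B then p ^ B.card * (1 - p) ^ (s.card - B.card) else 0)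
      = p ^ t.card := by
  rw [Finset.sum_ite, Finset.sum_const_zero, add_zero]
  have key : ∑ B ∈ s.powerset.filter (fun B => t ⊆ B), p ^ B.card * (1 - p) ^ (s.card - B.card)
      = ∑ B' ∈ (s \ t).powerset,
          p ^ t.card * (p ^ B'.card * (1 - p) ^ ((s \ t).card - B'.card)) := by
    refine Finset.sum_nbij' (fun B => B \ t) (fun B' => B' ∪ t) ?_ ?_ ?_ ?_ ?_
    · intro B hB
      simp only [Finset.mem_filter, Finset.mem_powerset] at hB
      exact Finset.mem_powerset.mpr (Finset.sdiff_subset_sdiff hB.1 le_rfl)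
    · intro B' hB'
      simp only [Finset.mem_powerset] at hB'
      refine Finset.mem_filter.mpr ⟨Finset.mem_powerset.mpr ?_, Finset.subset_union_right⟩
      exact Finset.union_subset (hB'.trans Finset.sdiff_subset) ht
    · intro B hB
      simp only [Finset.mem_filter, Finset.mem_powerset] at hB
      show B \ t ∪ t = B
      rw [Finset.sdiff_union_self_eq_union, Finset.union_eq_left.mpr hB.2]
    · intro B' hB'
      simp only [Finset.mem_powerset] at hB'
      show (B' ∪ t) \ t = B'
      rw [Finset.union_sdiff_right]
      exact Finset.sdiff_eq_self_of_disjoint (Finset.disjoint_left.mpr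
        fun a ha => (Finset.mem_sdiff.mp (hB' ha)).2)
    · intro B hB
      simp only [Finset.mem_filter, Finset.mem_powerset] at hB
      have h1 : (B \ t).card = B.card - t.card := Finset.card_sdiff_of_subset hB.2
      have h2 : t.card ≤ B.card := Finset.card_le_card hB.2
      have h3 : B.card ≤ s.card := Finset.card_le_card hB.1
      have h4 : (s \ t).card = s.card - t.card := Finset.card_sdiff_of_subset ht
      show p ^ B.card * (1 - p) ^ (s.card - B.card)
          = p ^ t.card * (p ^ (B \ t).card * (1 - p) ^ ((s \ t).card - (B \ t).card))
      rw [h1, h4]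
      have e1 : s.card - t.card - (B.card - t.card) = s.card - B.card := by omega
      have e2 : t.card + (B.card - t.card) = B.card := by omega
      rw [← mul_assoc, ← pow_add, e1, e2]
  rw [key, ← Finset.mul_sum, sum_w_one, mul_one]

lemma sum_w_mem (p : ℝ) (s : Finset α) (x : α) (hx : x ∈ s) :
    ∑ B ∈ s.powerset, (if x ∈ B then p ^ B.card * (1 - p) ^ (s.card - B.card) else 0) = p := by
  have h := sum_w_subset p s {x} (Finset.singleton_subset_iff.mpr hx)
  simpa [Finset.singleton_subset_iff] using h

lemma sum_w_pair (p : ℝ) (s : Finset α) (x y : α) (hx : x ∈ s) (hy : y ∈ s) (hxy : x ≠ y) :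
    ∑ B ∈ s.powerset, (if x ∈ B ∧ y ∈ B then p ^ B.card * (1 - p) ^ (s.card - B.card) else 0)
      = p ^ 2 := by
  have h := sum_w_subset p s {x, y} (Finset.insert_subset hx (Finset.singleton_subset_iff.mpr hy))
  rw [Finset.card_insert_of_notMem (Finset.notMem_singleton.mpr hxy),
    Finset.card_singleton] at h
  rw [← h]
  refine Finset.sum_congr rfl fun B _ => ?_
  congr 1
  simp [Finset.insert_subset_iff]

lemma sum_w_card (p : ℝ) (s : Finset α) :
    ∑ B ∈ s.powerset, p ^ B.card * (1 - p) ^ (s.card - B.card) * (B.card : ℝ)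
      = p * s.card := by
  have key : ∀ B ∈ s.powerset, p ^ B.card * (1 - p) ^ (s.card - B.card) * (B.card : ℝ)
      = ∑ x ∈ s, (if x ∈ B then p ^ B.card * (1 - p) ^ (s.card - B.card) else 0) := by
    intro B hB
    rw [Finset.sum_ite_mem, Finset.inter_eq_right.mpr (Finset.mem_powerset.mp hB),
      Finset.sum_const, nsmul_eq_mul, mul_comm]
  rw [Finset.sum_congr rfl key, Finset.sum_comm]
  rw [Finset.sum_congr rfl (fun x hx => sum_w_mem p s x hx), Finset.sum_const, nsmul_eq_mul,
    mul_comm]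

lemma sum_w_card_sq (p : ℝ) (s : Finset α) :
    ∑ B ∈ s.powerset, p ^ B.card * (1 - p) ^ (s.card - B.card) * (B.card : ℝ) ^ 2
      = p * s.card + p ^ 2 * s.card * (s.card - 1) := by
  have key : ∀ B ∈ s.powerset, p ^ B.card * (1 - p) ^ (s.card - B.card) * (B.card : ℝ) ^ 2
      = ∑ x ∈ s, ∑ y ∈ s,
          (if x ∈ B ∧ y ∈ B then p ^ B.card * (1 - p) ^ (s.card - B.card) else 0) := by
    intro B hB
    have hBs := Finset.mem_powerset.mp hB
    have hc : ((B.card : ℝ)) = ∑ x ∈ s, (if x ∈ B then (1:ℝ) else 0) := by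
      rw [Finset.sum_ite_mem, Finset.inter_eq_right.mpr hBs, Finset.sum_const, nsmul_eq_mul,
        mul_one]
    calc p ^ B.card * (1 - p) ^ (s.card - B.card) * (B.card : ℝ) ^ 2
        = ∑ x ∈ s, ∑ y ∈ s, (if x ∈ B then (1:ℝ) else 0) * (if y ∈ B then (1:ℝ) else 0)
            * (p ^ B.card * (1 - p) ^ (s.card - B.card)) := by
          have e : ∑ x ∈ s, ∑ y ∈ s, (if x ∈ B then (1:ℝ) else 0) * (if y ∈ B then (1:ℝ) else 0)
              * (p ^ B.card * (1 - p) ^ (s.card - B.card))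
              = (∑ x ∈ s, if x ∈ B then (1:ℝ) else 0) * ((∑ y ∈ s, if y ∈ B then (1:ℝ) else 0)
                * (p ^ B.card * (1 - p) ^ (s.card - B.card))) := by
            simp only [mul_assoc, ← Finset.sum_mul, ← Finset.mul_sum]
          rw [e, ← hc]; ring
      _ = _ := by
          refine Finset.sum_congr rfl fun x _ => Finset.sum_congr rfl fun y _ => ?_
          by_cases hx : x ∈ B <;> by_cases hy : y ∈ B <;> simp [hx, hy]
  rw [Finset.sum_congr rfl key, Finset.sum_comm]
  have inner : ∀ x ∈ s, ∑ B ∈ s.powerset, ∑ y ∈ s,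
      (if x ∈ B ∧ y ∈ B then p ^ B.card * (1 - p) ^ (s.card - B.card) else 0)
      = p + (s.card - 1) * p ^ 2 := by
    intro x hx
    rw [Finset.sum_comm]
    have : ∀ y ∈ s, ∑ B ∈ s.powerset,
        (if x ∈ B ∧ y ∈ B then p ^ B.card * (1 - p) ^ (s.card - B.card) else 0)
        = if y = x then p else p ^ 2 := by
      intro y hy
      by_cases hxy : y = x
      · subst hxy
        simp only [and_self, if_true]
        exact sum_w_mem p s y hy
      · rw [if_neg hxy]
        exact sum_w_pair p s x y hx hy (fun h => hxy h.symm)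
    rw [Finset.sum_congr rfl this]
    have hxs : ∑ y ∈ s, (if y = x then p else p ^ 2)
        = ∑ y ∈ s, (p ^ 2 + if y = x then p - p ^ 2 else 0) := by
      refine Finset.sum_congr rfl fun y _ => ?_
      by_cases h : y = x <;> simp [h]
    rw [hxs, Finset.sum_add_distrib, Finset.sum_const, Finset.sum_ite_eq' s x
      (fun _ => p - p ^ 2), if_pos hx, nsmul_eq_mul]
    ring
  rw [Finset.sum_congr rfl inner, Finset.sum_const, nsmul_eq_mul]
  ring

lemma sum_w_var (p : ℝ) (s : Finset α) :
    ∑ B ∈ s.powerset, p ^ B.card * (1 - p) ^ (s.card - B.card)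
      * ((B.card : ℝ) - p * s.card) ^ 2 = p * s.card * (1 - p) := by
  have expand : ∀ B ∈ s.powerset, p ^ B.card * (1 - p) ^ (s.card - B.card)
      * ((B.card : ℝ) - p * s.card) ^ 2
      = p ^ B.card * (1 - p) ^ (s.card - B.card) * (B.card : ℝ) ^ 2
        - 2 * (p * s.card) * (p ^ B.card * (1 - p) ^ (s.card - B.card) * (B.card : ℝ))
        + (p * s.card) ^ 2 * (p ^ B.card * (1 - p) ^ (s.card - B.card)) := by
    intro B _; ring
  rw [Finset.sum_congr rfl expand, Finset.sum_add_distrib, Finset.sum_sub_distrib,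
    ← Finset.mul_sum, ← Finset.mul_sum, sum_w_card_sq, sum_w_card, sum_w_one]
  ring

lemma cheb (p : ℝ) (h0 : 0 ≤ p) (h1 : p ≤ 1) (s : Finset α) (hpm : 0 < p * s.card) :
    1 - 4 / (p * s.card) ≤ ∑ B ∈ s.powerset,
      (if p * s.card / 2 ≤ (B.card : ℝ) then p ^ B.card * (1 - p) ^ (s.card - B.card) else 0) := by
  set a : ℝ := p * s.card with ha
  have hw : ∀ B : Finset α, 0 ≤ p ^ B.card * (1 - p) ^ (s.card - B.card) := fun B =>
    mul_nonneg (pow_nonneg h0 _) (pow_nonneg (by linarith) _)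
  have hsplit : ∑ B ∈ s.powerset,
        (if a / 2 ≤ (B.card : ℝ) then p ^ B.card * (1 - p) ^ (s.card - B.card) else 0)
      + ∑ B ∈ s.powerset,
        (if a / 2 ≤ (B.card : ℝ) then 0 else p ^ B.card * (1 - p) ^ (s.card - B.card))
      = 1 := by
    rw [← Finset.sum_add_distrib]
    calc ∑ B ∈ s.powerset, ((if a / 2 ≤ (B.card : ℝ) then p ^ B.card * (1 - p) ^ (s.card - B.card)
            else 0) + if a / 2 ≤ (B.card : ℝ) then 0 else p ^ B.card * (1 - p) ^ (s.card - B.card))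
        = ∑ B ∈ s.powerset, p ^ B.card * (1 - p) ^ (s.card - B.card) := by
          refine Finset.sum_congr rfl fun B _ => ?_
          split_ifs <;> ring
      _ = 1 := sum_w_one p s
  have hbad : ∑ B ∈ s.powerset,
        (if a / 2 ≤ (B.card : ℝ) then 0 else p ^ B.card * (1 - p) ^ (s.card - B.card))
      ≤ 4 / a := by
    have step1 : ∑ B ∈ s.powerset,
          (if a / 2 ≤ (B.card : ℝ) then 0 else p ^ B.card * (1 - p) ^ (s.card - B.card))
        ≤ ∑ B ∈ s.powerset, p ^ B.card * (1 - p) ^ (s.card - B.card)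
            * ((B.card : ℝ) - a) ^ 2 / (a / 2) ^ 2 := by
      refine Finset.sum_le_sum fun B _ => ?_
      split_ifs with h
      · exact div_nonneg (mul_nonneg (hw B) (sq_nonneg _)) (by positivity)
      · push_neg at h
        have h2 : (a / 2) ^ 2 ≤ ((B.card : ℝ) - a) ^ 2 := by
          nlinarith [Nat.cast_nonneg (α := ℝ) B.card]
        rw [le_div_iff₀ (by positivity)]
        exact mul_le_mul_of_nonneg_left h2 (hw B)
    have step2 : ∑ B ∈ s.powerset, p ^ B.card * (1 - p) ^ (s.card - B.card)
          * ((B.card : ℝ) - a) ^ 2 / (a / 2) ^ 2 = a * (1 - p) / (a / 2) ^ 2 := by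
      rw [← Finset.sum_div, sum_w_var]
    have step3 : a * (1 - p) / (a / 2) ^ 2 ≤ 4 / a := by
      rw [div_le_div_iff₀ (by positivity) hpm]
      nlinarith
    linarith
  linarith

open Classical in
lemma randProb_inter {β : Type*} [Fintype β] [DecidableEq β] (p : ℝ) (C : Finset β)
    (Q : Finset β → Prop) :
    (∑ A : Finset β, if Q (A ∩ C) then p ^ A.card * (1 - p) ^ (Fintype.card β - A.card) else 0)
      = ∑ B ∈ C.powerset, (if Q B then p ^ B.card * (1 - p) ^ (C.card - B.card) else 0) := by
  have hstep : ∑ A : Finset β,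
        (if Q (A ∩ C) then p ^ A.card * (1 - p) ^ (Fintype.card β - A.card) else 0)
      = ∑ x ∈ C.powerset ×ˢ (Finset.univ \ C).powerset,
          (if Q x.1 then p ^ x.1.card * (1 - p) ^ (C.card - x.1.card) else 0)
            * (p ^ x.2.card * (1 - p) ^ ((Finset.univ \ C).card - x.2.card)) := by
    refine Finset.sum_nbij' (fun A => (A ∩ C, A \ C)) (fun x => x.1 ∪ x.2) ?_ ?_ ?_ ?_ ?_
    · intro A _
      refine Finset.mem_product.mpr ⟨Finset.mem_powerset.mpr Finset.inter_subset_right,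
        Finset.mem_powerset.mpr ?_⟩
      intro a ha
      simp only [Finset.mem_sdiff, Finset.mem_univ, true_and]
      exact (Finset.mem_sdiff.mp ha).2
    · intro x _; exact Finset.mem_univ _
    · intro A _
      show A ∩ C ∪ A \ C = A
      ext a; simp only [Finset.mem_union, Finset.mem_inter, Finset.mem_sdiff]; tauto
    · intro x hx
      obtain ⟨h1, h2⟩ := Finset.mem_product.mp hx
      rw [Finset.mem_powerset] at h1 h2
      have hd : ∀ a ∈ x.2, a ∉ C := fun a ha => (Finset.mem_sdiff.mp (h2 ha)).2
      show ((x.1 ∪ x.2) ∩ C, (x.1 ∪ x.2) \ C) = x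
      have e1 : (x.1 ∪ x.2) ∩ C = x.1 := by
        ext a
        simp only [Finset.mem_inter, Finset.mem_union]
        constructor
        · rintro ⟨h | h, hc⟩
          · exact h
          · exact absurd hc (hd a h)
        · intro h; exact ⟨Or.inl h, h1 h⟩
      have e2 : (x.1 ∪ x.2) \ C = x.2 := by
        ext a
        simp only [Finset.mem_sdiff, Finset.mem_union]
        constructor
        · rintro ⟨h | h, hc⟩
          · exact absurd (h1 h) hc
          · exact h
        · intro h; exact ⟨Or.inr h, hd a h⟩
      rw [e1, e2]
    · intro A _
      show (if Q (A ∩ C) then p ^ A.card * (1 - p) ^ (Fintype.card β - A.card) else 0)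
        = (if Q (A ∩ C) then p ^ (A ∩ C).card * (1 - p) ^ (C.card - (A ∩ C).card) else 0)
          * (p ^ (A \ C).card * (1 - p) ^ ((Finset.univ \ C).card - (A \ C).card))
      split_ifs with h
      · have c1 : (A ∩ C).card + (A \ C).card = A.card := by
          rw [Finset.card_inter_add_card_sdiff]
        have c2 : (Finset.univ \ C).card = Fintype.card β - C.card := by
          rw [Finset.card_sdiff_of_subset (Finset.subset_univ C), Finset.card_univ]
        have c3 : (A ∩ C).card ≤ C.card := Finset.card_le_card Finset.inter_subset_right
        have c4 : (A \ C).card ≤ (Finset.univ \ C).card :=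
          Finset.card_le_card (Finset.sdiff_subset_sdiff (Finset.subset_univ A) le_rfl)
        have c5 : C.card ≤ Fintype.card β := by
          rw [← Finset.card_univ]; exact Finset.card_le_card (Finset.subset_univ C)
        have c6 : A.card ≤ Fintype.card β := by
          rw [← Finset.card_univ]; exact Finset.card_le_card (Finset.subset_univ A)
        have e1 : A.card = (A ∩ C).card + (A \ C).card := c1.symm
        have e2 : Fintype.card β - A.card
            = (C.card - (A ∩ C).card) + ((Finset.univ \ C).card - (A \ C).card) := by omega
        rw [e1, show Fintype.card β - ((A ∩ C).card + (A \ C).card)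
            = (C.card - (A ∩ C).card) + ((Finset.univ \ C).card - (A \ C).card) from by omega,
          pow_add, pow_add]
        ring
      · simp
  rw [hstep, Finset.sum_product]
  refine Finset.sum_congr rfl fun B _ => ?_
  dsimp only
  by_cases hQ : Q B
  · simp only [hQ, if_true]; rw [← Finset.mul_sum, sum_w_one, mul_one]
  · simp only [hQ, if_false, zero_mul, Finset.sum_const_zero]


/-- the moment curve -/
def mcurve (F : Type*) [Field F] (d : ℕ) (t : F) : Fin d → F := fun i => t ^ (i.val + 1)

lemma mcurve_zero {F : Type*} [Field F] {d : ℕ} (hd : 0 < d) (t : F) :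
    mcurve F d t ⟨0, hd⟩ = t := by simp [mcurve]

lemma genPos_of_subset_curve (F : Type*) [Field F] (d : ℕ) (hd : 2 ≤ d)
    (S : Set (Fin d → F)) (hS : ∀ x ∈ S, ∃ t : F, x = mcurve F d t) :
    GenPos F d S := by
  intro A hA hcard ⟨W, hWrank, hAW⟩
  classical
  have hd0 : 0 < d := by omega
  -- direction is a proper subspace
  have hlt : W.direction < ⊤ := by
    rcases lt_or_eq_of_le (le_top : W.direction ≤ ⊤) with h | h
    · exact h
    · exfalso
      have : Module.finrank F W.direction = d := by
        rw [h, finrank_top, Module.finrank_pi]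
        simp
      omega
  obtain ⟨f, hf0, hfbot⟩ := Submodule.exists_dual_map_eq_bot_of_lt_top hlt inferInstance
  have hker : ∀ v ∈ W.direction, f v = 0 := fun v hv =>
    LinearMap.mem_ker.mp (LinearMap.le_ker_iff_map.mpr hfbot hv)
  -- base point
  have hAne : A.Nonempty := Finset.card_pos.mp (by omega)
  obtain ⟨x₀, hx₀⟩ := hAne
  have hfconst : ∀ x ∈ A, f x = f x₀ := by
    intro x hx
    have hv : x - x₀ ∈ W.direction := by
      have := AffineSubspace.vsub_mem_direction (hAW x hx) (hAW x₀ hx₀)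
      simpa using this
    have h0 := hker _ hv
    rw [map_sub] at h0
    exact sub_eq_zero.mp h0
  -- every point of A lies on the curve, parametrized by its 0-th coordinate
  have hcur : ∀ x ∈ A, x = mcurve F d (x ⟨0, hd0⟩) := by
    intro x hx
    obtain ⟨t, ht⟩ := hS x (hA hx)
    rw [ht, mcurve_zero hd0]
  -- the parameters
  set T : Finset F := A.image (fun x => x ⟨0, hd0⟩) with hT
  have hinj : Set.InjOn (fun x => x ⟨0, hd0⟩) (A : Set (Fin d → F)) := by
    intro x hx y hy hxy
    have h' : x ⟨0, hd0⟩ = y ⟨0, hd0⟩ := hxy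
    conv_lhs => rw [hcur x (Finset.mem_coe.mp hx)]
    conv_rhs => rw [hcur y (Finset.mem_coe.mp hy)]
    rw [h']
  have hTcard : T.card = d + 1 := by
    rw [hT, Finset.card_image_of_injOn hinj, hcard]
  -- the polynomial
  set e : Fin d → (Fin d → F) := fun i => fun j => if i = j then 1 else 0 with he
  set P : F[X] := (∑ i : Fin d, Polynomial.C (f (e i)) * X ^ (i.val + 1))
    - Polynomial.C (f x₀) with hP
  have heval : ∀ t ∈ T, P.eval t = 0 := by
    intro t ht
    obtain ⟨x, hx, rfl⟩ := Finset.mem_image.mp ht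
    have hx' := hcur x hx
    rw [hP]
    simp only [eval_sub, eval_finset_sum, eval_mul, eval_C, eval_pow, eval_X]
    have hfx : f x = ∑ i : Fin d, f (e i) * (x ⟨0, hd0⟩) ^ (i.val + 1) := by
      conv_lhs => rw [LinearMap.pi_apply_eq_sum_univ f x]
      refine Finset.sum_congr rfl fun i _ => ?_
      rw [smul_eq_mul, mul_comm]
      congr 1
      conv_lhs => rw [hx']
      rfl
    rw [← hfx, hfconst x hx]
    ring
  have hPne : P ≠ 0 := by
    have : ∃ i : Fin d, f (e i) ≠ 0 := by
      by_contra hall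
      push_neg at hall
      apply hf0
      apply LinearMap.ext
      intro x
      rw [LinearMap.pi_apply_eq_sum_univ f x]
      simp only [LinearMap.zero_apply]
      refine Finset.sum_eq_zero fun i _ => ?_
      rw [show (fun j => if i = j then (1:F) else 0) = e i from rfl, hall i, smul_zero]
    obtain ⟨i, hi⟩ := this
    intro hzero
    apply hi
    have := congrArg (fun q => Polynomial.coeff q (i.val + 1)) hzero
    simp only [hP, coeff_sub, finset_sum_coeff, coeff_C_mul, coeff_X_pow, coeff_zero] at this
    rw [Polynomial.coeff_C, if_neg (by omega)] at this
    rw [Finset.sum_eq_single i] at this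
    · simpa using this
    · intro j _ hj
      rw [if_neg (by simpa [Fin.ext_iff] using fun h => hj (Fin.ext (by omega)))]
      exact mul_zero _
    · intro h; exact absurd (Finset.mem_univ i) h
  have hdeg : P.natDegree ≤ d := by
    rw [hP]
    refine le_trans (natDegree_sub_le _ _) ?_
    rw [max_le_iff]
    constructor
    · refine le_trans (natDegree_sum_le _ _) ?_
      rw [Finset.fold_max_le]
      refine ⟨Nat.zero_le _, fun i _ => ?_⟩
      refine le_trans (natDegree_C_mul_le _ _) ?_
      rw [natDegree_X_pow]
      omega
    · simp
  have := Polynomial.eq_zero_of_natDegree_lt_card_of_eval_eq_zero' P T heval (by omega)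
  exact hPne this

/-- Claim 10. -/
theorem stmt11 (d : ℕ) (hd : 2 ≤ d) (ε : ℝ) (hε : 0 < ε) :
    ∃ K : ℝ, 0 < K ∧
      ∀ (F : Type) [Field F] [Fintype F], ∀ p : ℝ, 0 ≤ p → p ≤ 1 →
        K ≤ p * (Fintype.card F : ℝ) →
        1 - ε ≤ randProb (Fin d → F) p
          (fun A => ∃ S ⊆ A, GenPos F d ↑S ∧
            p * (Fintype.card F : ℝ) / 2 ≤ (S.card : ℝ)) := by
  classical
  refine ⟨4 / ε, by positivity, ?_⟩
  intro F _ _ p hp0 hp1 hK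
  have hd0 : 0 < d := by omega
  have hq : (0:ℝ) < p * (Fintype.card F : ℝ) := lt_of_lt_of_le (by positivity) hK
  set C : Finset (Fin d → F) := Finset.image (fun t => mcurve F d t) Finset.univ with hC
  have hCcard : C.card = Fintype.card F := by
    rw [hC, Finset.card_image_of_injective _ ?_, Finset.card_univ]
    intro a b hab
    have := congrFun hab ⟨0, hd0⟩
    simpa [mcurve] using this
  have hCq : ((C.card : ℝ)) = (Fintype.card F : ℝ) := by rw [hCcard]
  have step1 : 1 - ε ≤ 1 - 4 / (p * C.card) := by
    rw [hCq]
    have h4 : 4 ≤ p * (Fintype.card F : ℝ) * ε := by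
      have := (div_le_iff₀ hε).mp hK
      linarith
    have : 4 / (p * (Fintype.card F : ℝ)) ≤ ε := by
      rw [div_le_iff₀ hq]
      linarith
    linarith
  have hqC : (0:ℝ) < p * C.card := by rw [hCq]; exact hq
  have step2 := cheb p hp0 hp1 C hqC
  have step3 := randProb_inter (β := Fin d → F) p C
    (fun B => p * (C.card : ℝ) / 2 ≤ (B.card : ℝ))
  -- last step: the event implies containment of a general position set
  have step4 : ∑ A : Finset (Fin d → F),
        (if p * (C.card : ℝ) / 2 ≤ (((A ∩ C).card : ℕ) : ℝ)
          then p ^ A.card * (1 - p) ^ (Fintype.card (Fin d → F) - A.card) else 0)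
      ≤ randProb (Fin d → F) p
          (fun A => ∃ S ⊆ A, GenPos F d ↑S ∧
            p * (Fintype.card F : ℝ) / 2 ≤ (S.card : ℝ)) := by
    rw [randProb]
    refine Finset.sum_le_sum fun A _ => ?_
    have hw : (0:ℝ) ≤ p ^ A.card * (1 - p) ^ (Fintype.card (Fin d → F) - A.card) :=
      mul_nonneg (pow_nonneg hp0 _) (pow_nonneg (by linarith) _)
    by_cases h : p * (C.card : ℝ) / 2 ≤ (((A ∩ C).card : ℕ) : ℝ)
    · rw [if_pos h, if_pos]
      refine ⟨A ∩ C, Finset.inter_subset_left, ?_, ?_⟩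
      · refine genPos_of_subset_curve F d hd _ ?_
        intro x hx
        have hxC : x ∈ C := (Finset.mem_inter.mp (Finset.mem_coe.mp hx)).2
        rw [hC] at hxC
        obtain ⟨t, _, ht⟩ := Finset.mem_image.mp hxC
        exact ⟨t, ht.symm⟩
      · rw [← hCq]; exact h
    · rw [if_neg h]
      split_ifs
      · exact hw
      · exact le_refl 0
  calc 1 - ε ≤ 1 - 4 / (p * C.card) := step1
    _ ≤ ∑ B ∈ C.powerset,
        (if p * (C.card : ℝ) / 2 ≤ (B.card : ℝ)
          then p ^ B.card * (1 - p) ^ (C.card - B.card) else 0) := step2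
    _ = ∑ A : Finset (Fin d → F),
        (if p * (C.card : ℝ) / 2 ≤ (((A ∩ C).card : ℕ) : ℝ)
          then p ^ A.card * (1 - p) ^ (Fintype.card (Fin d → F) - A.card) else 0) := step3.symm
    _ ≤ _ := step4
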